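/- arXiv:2603.12974 — 3 statements merged into one kernel-verified Lean document; each statement's English description precedes it below -/
import Mathlib

section
/- Let k be a field, q ∈ k nonzero, and Λ = k⟨x,y,z⟩/(x², y², z², yz, xy + q·yx, xz − zx, zy − zx). Then the left ideal Λ·(yx) generated by yx is one-dimensional as a k-vector space, spanned by yx. -/
variable (k : Type) [Field k] (q : k)

/-- The defining relations of the Ringel–Zhang algebra. -/
inductive LamRel (k : Type) [Field k] (q : k) :
    FreeAlgebra k (Fin 3) → FreeAlgebra k (Fin 3) → Prop
  | x_sq : LamRel k q ((FreeAlgebra.ι k 0) * (FreeAlgebra.ι k 0)) 0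
  | y_sq : LamRel k q ((FreeAlgebra.ι k 1) * (FreeAlgebra.ι k 1)) 0
  | z_sq : LamRel k q ((FreeAlgebra.ι k 2) * (FreeAlgebra.ι k 2)) 0
  | yz : LamRel k q ((FreeAlgebra.ι k 1) * (FreeAlgebra.ι k 2)) 0
  | xy : LamRel k q ((FreeAlgebra.ι k 0) * (FreeAlgebra.ι k 1)
      + q • ((FreeAlgebra.ι k 1) * (FreeAlgebra.ι k 0))) 0
  | xz : LamRel k q ((FreeAlgebra.ι k 0) * (FreeAlgebra.ι k 2)
      - (FreeAlgebra.ι k 2) * (FreeAlgebra.ι k 0)) 0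
  | zy : LamRel k q ((FreeAlgebra.ι k 2) * (FreeAlgebra.ι k 1)
      - (FreeAlgebra.ι k 2) * (FreeAlgebra.ι k 0)) 0

/-- The Ringel–Zhang algebra Λ = k⟨x,y,z⟩/(x²,y²,z²,yz,xy+q·yx,xz−zx,zy−zx). -/
def Lam (k : Type) [Field k] (q : k) : Type := RingQuot (LamRel k q)

instance : Ring (Lam k q) := inferInstanceAs (Ring (RingQuot (LamRel k q)))
instance : Algebra k (Lam k q) := inferInstanceAs (Algebra k (RingQuot (LamRel k q)))

/-- The image of the generator x in Λ. -/
def Lam.x : Lam k q := RingQuot.mkAlgHom k (LamRel k q) (FreeAlgebra.ι k 0)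
/-- The image of the generator y in Λ. -/
def Lam.y : Lam k q := RingQuot.mkAlgHom k (LamRel k q) (FreeAlgebra.ι k 1)
/-- The image of the generator z in Λ. -/
def Lam.z : Lam k q := RingQuot.mkAlgHom k (LamRel k q) (FreeAlgebra.ι k 2)

/-- Representation matrices -/
def Xmat : Matrix (Fin 4) (Fin 4) k := !![0,0,0,0; 1,0,0,0; 0,0,0,0; 0,0,-q,0]

def Ymat : Matrix (Fin 4) (Fin 4) k := !![0,0,0,0; 0,0,0,0; 1,0,0,0; 0,1,0,0]

def RZmat : Fin 3 → Matrix (Fin 4) (Fin 4) k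
  | 0 => Xmat k q
  | 1 => Ymat k
  | 2 => 0

lemma hXX : Xmat k q * Xmat k q = 0 := by
  ext i j
  fin_cases i <;> fin_cases j <;>
    simp [Xmat, Matrix.mul_apply, Fin.sum_univ_four]

lemma hYY : Ymat k * Ymat k = 0 := by
  ext i j
  fin_cases i <;> fin_cases j <;>
    simp [Ymat, Matrix.mul_apply, Fin.sum_univ_four]

lemma hXY : Xmat k q * Ymat k + q • (Ymat k * Xmat k q) = 0 := by
  ext i j
  fin_cases i <;> fin_cases j <;>
    simp [Xmat, Ymat, Matrix.mul_apply, Matrix.smul_apply, Matrix.vecHead, Matrix.vecTail, Fin.sum_univ_four, mul_comm]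

lemma RZrel : ∀ ⦃a b⦄, LamRel k q a b →
    (FreeAlgebra.lift k (RZmat k q)) a = (FreeAlgebra.lift k (RZmat k q)) b := by
  intro a b h
  cases h <;>
    simp only [map_mul, map_add, map_sub, map_smul, map_zero, FreeAlgebra.lift_ι_apply, RZmat]
  · exact hXX k q
  · exact hYY k
  · simp
  · simp
  · exact hXY k q
  · simp
  · simp

/-- The representation of Λ on k⁴. -/
noncomputable def RZrep : Lam k q →ₐ[k] Matrix (Fin 4) (Fin 4) k :=
  RingQuot.liftAlgHom k ⟨FreeAlgebra.lift k (RZmat k q), RZrel k q⟩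

lemma RZrep_gen (i : Fin 3) :
    RZrep k q (RingQuot.mkAlgHom k (LamRel k q) (FreeAlgebra.ι k i)) = RZmat k q i :=
  (RingQuot.liftAlgHom_mkAlgHom_apply k _ (RZrel k q) _).trans
    (FreeAlgebra.lift_ι_apply _ _)

lemma yx_ne_zero (hq : q ≠ 0) : Lam.y k q * Lam.x k q ≠ 0 := by
  intro h
  have h2 := congrArg (RZrep k q) h
  rw [map_mul, map_zero, Lam.x, Lam.y, RZrep_gen, RZrep_gen] at h2
  have h3 := congrFun (congrFun h2 3) 0
  simp [RZmat, Xmat, Ymat, Matrix.mul_apply, Fin.sum_univ_four] at h3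

lemma x_sq : Lam.x k q * Lam.x k q = 0 := by
  have := RingQuot.mkAlgHom_rel k (LamRel.x_sq (k := k) (q := q))
  simp only [map_mul, map_zero] at this
  exact this

lemma z_x_sq : Lam.z k q * Lam.x k q * Lam.x k q = 0 := by
  rw [mul_assoc, x_sq, mul_zero]

lemma xmul : Lam.x k q * (Lam.y k q * Lam.x k q) = 0 := by
  have h := RingQuot.mkAlgHom_rel k (LamRel.xy (k := k) (q := q))
  simp only [map_add, map_mul, map_smul, map_zero] at h
  have hxy : Lam.x k q * Lam.y k q = -(q • (Lam.y k q * Lam.x k q)) := by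
    rw [eq_neg_iff_add_eq_zero]; exact h
  rw [← mul_assoc, hxy]
  rw [neg_mul, smul_mul_assoc, mul_assoc, x_sq, mul_zero, smul_zero, neg_zero]

lemma ymul : Lam.y k q * (Lam.y k q * Lam.x k q) = 0 := by
  have h := RingQuot.mkAlgHom_rel k (LamRel.y_sq (k := k) (q := q))
  simp only [map_mul, map_zero] at h
  have h' : Lam.y k q * Lam.y k q = 0 := h
  rw [← mul_assoc, h', zero_mul]

lemma zmul : Lam.z k q * (Lam.y k q * Lam.x k q) = 0 := by
  have h := RingQuot.mkAlgHom_rel k (LamRel.zy (k := k) (q := q))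
  simp only [map_sub, map_mul, map_zero, sub_eq_zero] at h
  have h' : Lam.z k q * Lam.y k q = Lam.z k q * Lam.x k q := h
  rw [← mul_assoc, h']
  exact z_x_sq k q

lemma mul_mem_span (a : Lam k q) :
    a * (Lam.y k q * Lam.x k q) ∈ Submodule.span k {Lam.y k q * Lam.x k q} := by
  obtain ⟨u, rfl⟩ := RingQuot.mkAlgHom_surjective k (LamRel k q) a
  induction u using FreeAlgebra.induction with
  | grade0 c =>
      rw [AlgHom.commutes]
      have key : algebraMap k (Lam k q) c * (Lam.y k q * Lam.x k q) ∈ Submodule.span k {Lam.y k q * Lam.x k q} := by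
        rw [Algebra.algebraMap_eq_smul_one, smul_mul_assoc, one_mul]
        exact Submodule.smul_mem _ c (Submodule.mem_span_singleton_self _)
      exact key
  | grade1 i =>
      fin_cases i
      · show Lam.x k q * (Lam.y k q * Lam.x k q) ∈ _
        rw [xmul]; exact Submodule.zero_mem _
      · show Lam.y k q * (Lam.y k q * Lam.x k q) ∈ _
        rw [ymul]; exact Submodule.zero_mem _
      · show Lam.z k q * (Lam.y k q * Lam.x k q) ∈ _
        rw [zmul]; exact Submodule.zero_mem _
  | mul u v hu hv =>
      rw [map_mul]
      have key : ∀ A B : Lam k q, A * (Lam.y k q * Lam.x k q) ∈ Submodule.span k {Lam.y k q * Lam.x k q} → B * (Lam.y k q * Lam.x k q) ∈ Submodule.span k {Lam.y k q * Lam.x k q} →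
          A * B * (Lam.y k q * Lam.x k q) ∈ Submodule.span k {Lam.y k q * Lam.x k q} := by
        intro A B hu hv
        rw [mul_assoc]
        obtain ⟨c, hc⟩ := Submodule.mem_span_singleton.mp hv
        rw [← hc, mul_smul_comm]
        exact Submodule.smul_mem _ c hu
      exact key _ _ hu hv
  | add u v hu hv =>
      rw [map_add]
      have key : ∀ A B : Lam k q, A * (Lam.y k q * Lam.x k q) ∈ Submodule.span k {Lam.y k q * Lam.x k q} → B * (Lam.y k q * Lam.x k q) ∈ Submodule.span k {Lam.y k q * Lam.x k q} →
          (A + B) * (Lam.y k q * Lam.x k q) ∈ Submodule.span k {Lam.y k q * Lam.x k q} := by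
        intro A B hu hv
        rw [add_mul]
        exact Submodule.add_mem _ hu hv
      exact key _ _ hu hv

theorem stmt4 (hq : q ≠ 0) :
    Lam.y k q * Lam.x k q ≠ 0 ∧
    (Submodule.span (Lam k q) {Lam.y k q * Lam.x k q}).restrictScalars k
      = Submodule.span k {Lam.y k q * Lam.x k q} ∧
    Module.finrank k
      ((Submodule.span (Lam k q) {Lam.y k q * Lam.x k q}).restrictScalars k) = 1 := by
  have hne := yx_ne_zero k q hq
  have hspan : (Submodule.span (Lam k q) {Lam.y k q * Lam.x k q}).restrictScalars k
      = Submodule.span k {Lam.y k q * Lam.x k q} := by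
    apply le_antisymm
    · intro v hv
      rw [Submodule.restrictScalars_mem, Submodule.mem_span_singleton] at hv
      obtain ⟨a, rfl⟩ := hv
      rw [smul_eq_mul]
      exact mul_mem_span k q a
    · rw [Submodule.span_le]
      intro v hv
      rw [Set.mem_singleton_iff] at hv
      subst hv
      exact Submodule.subset_span rfl
  refine ⟨hne, hspan, ?_⟩
  rw [hspan]
  exact finrank_span_singleton hne
end

section
/- Let k be a field, q ∈ k nonzero, and Λ = k⟨x,y,z⟩/(x², y², z², yz, xy + q·yx, xz − zx, zy − zx). Then the images of 1, x, y, z, yx, zx form a k-basis of Λ; in particular dim_k Λ = 6. -/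
variable (k : Type) [Field k] (q : k)

/-! ### Auxiliary constructions: a 6-dimensional matrix model -/

open Matrix in
/-- The left-regular representation matrix of x. -/
noncomputable def LamAux.X : Matrix (Fin 6) (Fin 6) k :=
  single 1 0 1 + single 4 2 (-q) + single 5 3 1

open Matrix in
/-- The left-regular representation matrix of y. -/
noncomputable def LamAux.Y : Matrix (Fin 6) (Fin 6) k :=
  single 2 0 1 + single 4 1 1

open Matrix in
/-- The left-regular representation matrix of z. -/
noncomputable def LamAux.Z : Matrix (Fin 6) (Fin 6) k :=
  single 3 0 1 + single 5 1 1 + single 5 2 1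

namespace LamAux

lemma rXX : X k q * X k q = 0 := by
  simp [X, mul_add, add_mul]
lemma rYY : Y k * Y k = 0 := by
  simp [Y, mul_add, add_mul]
lemma rZZ : Z k * Z k = 0 := by
  simp [Z, mul_add, add_mul]
lemma rYZ : Y k * Z k = 0 := by
  simp [Y, Z, mul_add, add_mul]
lemma rXY : X k q * Y k + q • (Y k * X k q) = 0 := by
  simp [X, Y, mul_add, add_mul, smul_add, Matrix.smul_single,
    ← Matrix.single_add]
lemma rXZ : X k q * Z k - Z k * X k q = 0 := by
  simp [X, Z, mul_add, add_mul]
lemma rZY : Z k * Y k - Z k * X k q = 0 := by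
  simp [Y, Z, X, mul_add, add_mul]

lemma rYX : Y k * X k q = Matrix.single 4 0 1 := by
  simp [Y, X, mul_add, add_mul]
lemma rZX : Z k * X k q = Matrix.single 5 0 1 := by
  simp [Z, X, mul_add, add_mul]

/-- The algebra morphism from the free algebra to matrices. -/
noncomputable def phi : FreeAlgebra k (Fin 3) →ₐ[k] Matrix (Fin 6) (Fin 6) k :=
  FreeAlgebra.lift k ![X k q, Y k, Z k]

lemma phi_rel : ∀ ⦃a b : FreeAlgebra k (Fin 3)⦄, LamRel k q a b → phi k q a = phi k q b := by
  intro a b h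
  cases h <;>
    simp only [phi, map_mul, map_add, map_sub, map_smul, map_zero, FreeAlgebra.lift_ι_apply,
      Matrix.cons_val_zero, Matrix.cons_val_one, Matrix.head_cons, Matrix.cons_val_two,
      Matrix.tail_cons]
  · exact rXX k q
  · exact rYY k
  · exact rZZ k
  · exact rYZ k
  · exact rXY k q
  · exact rXZ k q
  · exact rZY k q

/-- The induced algebra morphism Λ → M₆(k). -/
noncomputable def psi : Lam k q →ₐ[k] Matrix (Fin 6) (Fin 6) k :=
  RingQuot.liftAlgHom k ⟨phi k q, phi_rel k q⟩

lemma psi_x : psi k q (Lam.x k q) = X k q :=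
  (RingQuot.liftAlgHom_mkAlgHom_apply k (phi k q) (phi_rel k q) (FreeAlgebra.ι k 0)).trans
    (by rw [phi, FreeAlgebra.lift_ι_apply]; rfl)
lemma psi_y : psi k q (Lam.y k q) = Y k :=
  (RingQuot.liftAlgHom_mkAlgHom_apply k (phi k q) (phi_rel k q) (FreeAlgebra.ι k 1)).trans
    (by rw [phi, FreeAlgebra.lift_ι_apply]; rfl)
lemma psi_z : psi k q (Lam.z k q) = Z k :=
  (RingQuot.liftAlgHom_mkAlgHom_apply k (phi k q) (phi_rel k q) (FreeAlgebra.ι k 2)).trans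
    (by rw [phi, FreeAlgebra.lift_ι_apply]; rfl)

/-- The "first column of ψ" linear map. -/
noncomputable def L : Lam k q →ₗ[k] (Fin 6 → k) where
  toFun a := fun i => psi k q a i 0
  map_add' a b := by ext i; simp [map_add]
  map_smul' c a := by ext i; simp [map_smul]

/-- The candidate basis family. -/
noncomputable def v : Fin 6 → Lam k q :=
  ![1, Lam.x k q, Lam.y k q, Lam.z k q,
    Lam.y k q * Lam.x k q, Lam.z k q * Lam.x k q]

lemma L_one : L k q 1 = fun i => (1 : Matrix (Fin 6) (Fin 6) k) i 0 := by
  funext i; simp only [L, LinearMap.coe_mk, AddHom.coe_mk, map_one]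

lemma L_x : L k q (Lam.x k q) = fun i => X k q i 0 := by
  funext i; simp only [L, LinearMap.coe_mk, AddHom.coe_mk, psi_x]

lemma L_y : L k q (Lam.y k q) = fun i => Y k i 0 := by
  funext i; simp only [L, LinearMap.coe_mk, AddHom.coe_mk, psi_y]

lemma L_z : L k q (Lam.z k q) = fun i => Z k i 0 := by
  funext i; simp only [L, LinearMap.coe_mk, AddHom.coe_mk, psi_z]

lemma L_yx : L k q (Lam.y k q * Lam.x k q) =
    fun i => Matrix.single (4 : Fin 6) (0 : Fin 6) (1 : k) i 0 := by
  funext i; simp only [L, LinearMap.coe_mk, AddHom.coe_mk, map_mul, psi_x, psi_y, rYX]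

lemma L_zx : L k q (Lam.z k q * Lam.x k q) =
    fun i => Matrix.single (5 : Fin 6) (0 : Fin 6) (1 : k) i 0 := by
  funext i; simp only [L, LinearMap.coe_mk, AddHom.coe_mk, map_mul, psi_x, psi_z, rZX]

lemma L_comp : L k q ∘ v k q = ⇑(Pi.basisFun k (Fin 6)) := by
  funext j
  fin_cases j
  · show L k q 1 = _
    rw [L_one]; funext i
    fin_cases i <;> simp [Matrix.one_apply, Pi.basisFun_apply, Pi.single_apply]
  · show L k q (Lam.x k q) = _
    rw [L_x]; funext i
    fin_cases i <;>
      simp [X, Matrix.single, Matrix.add_apply, Pi.basisFun_apply, Pi.single_apply]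
  · show L k q (Lam.y k q) = _
    rw [L_y]; funext i
    fin_cases i <;>
      simp [Y, Matrix.single, Matrix.add_apply, Pi.basisFun_apply, Pi.single_apply]
  · show L k q (Lam.z k q) = _
    rw [L_z]; funext i
    fin_cases i <;>
      simp [Z, Matrix.single, Matrix.add_apply, Pi.basisFun_apply, Pi.single_apply]
  · show L k q (Lam.y k q * Lam.x k q) = _
    rw [L_yx]; funext i
    fin_cases i <;>
      simp [Matrix.single, Pi.basisFun_apply, Pi.single_apply]
  · show L k q (Lam.z k q * Lam.x k q) = _
    rw [L_zx]; funext i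
    fin_cases i <;>
      simp [Matrix.single, Pi.basisFun_apply, Pi.single_apply]

lemma li : LinearIndependent k (v k q) := by
  have h : LinearIndependent k (L k q ∘ v k q) := by
    rw [L_comp]; exact (Pi.basisFun k (Fin 6)).linearIndependent
  exact h.of_comp (L k q)

/-! ### Relations in Λ -/

lemma lxx : Lam.x k q * Lam.x k q = 0 := by
  have := RingQuot.mkAlgHom_rel k (LamRel.x_sq (k := k) (q := q))
  simp [map_mul] at this; exact this
lemma lyy : Lam.y k q * Lam.y k q = 0 := by
  have := RingQuot.mkAlgHom_rel k (LamRel.y_sq (k := k) (q := q))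
  simp [map_mul] at this; exact this
lemma lzz : Lam.z k q * Lam.z k q = 0 := by
  have := RingQuot.mkAlgHom_rel k (LamRel.z_sq (k := k) (q := q))
  simp [map_mul] at this; exact this
lemma lyz : Lam.y k q * Lam.z k q = 0 := by
  have := RingQuot.mkAlgHom_rel k (LamRel.yz (k := k) (q := q))
  simp [map_mul] at this; exact this
lemma lxy : Lam.x k q * Lam.y k q = -(q • (Lam.y k q * Lam.x k q)) := by
  have := RingQuot.mkAlgHom_rel k (LamRel.xy (k := k) (q := q))
  simp only [map_add, map_mul, map_smul, map_zero] at this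
  exact eq_neg_of_add_eq_zero_left this
lemma lxz : Lam.x k q * Lam.z k q = Lam.z k q * Lam.x k q := by
  have := RingQuot.mkAlgHom_rel k (LamRel.xz (k := k) (q := q))
  simp only [map_sub, map_mul, map_zero] at this
  exact sub_eq_zero.mp this
lemma lzy : Lam.z k q * Lam.y k q = Lam.z k q * Lam.x k q := by
  have := RingQuot.mkAlgHom_rel k (LamRel.zy (k := k) (q := q))
  simp only [map_sub, map_mul, map_zero] at this
  exact sub_eq_zero.mp this

section products
variable {k q}

local notation "x" => Lam.x k q
local notation "y" => Lam.y k q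
local notation "z" => Lam.z k q

lemma lax : (y * x) * x = 0 := by rw [mul_assoc, lxx, mul_zero]
lemma lbx : (z * x) * x = 0 := by rw [mul_assoc, lxx, mul_zero]
lemma lxa : x * (y * x) = 0 := by
  rw [← mul_assoc, lxy, neg_mul, smul_mul_assoc, lax, smul_zero, neg_zero]
lemma lxb : x * (z * x) = 0 := by rw [← mul_assoc, lxz, lbx]
lemma lya : y * (y * x) = 0 := by rw [← mul_assoc, lyy, zero_mul]
lemma lyb : y * (z * x) = 0 := by rw [← mul_assoc, lyz, zero_mul]
lemma lza : z * (y * x) = 0 := by rw [← mul_assoc, lzy, lbx]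
lemma lzb : z * (z * x) = 0 := by rw [← mul_assoc, lzz, zero_mul]
lemma lay : (y * x) * y = 0 := by
  rw [mul_assoc, lxy, mul_neg, mul_smul_comm, lya, smul_zero, neg_zero]
lemma laz : (y * x) * z = 0 := by rw [mul_assoc, lxz, lyb]
lemma lby : (z * x) * y = 0 := by
  rw [mul_assoc, lxy, mul_neg, mul_smul_comm, lza, smul_zero, neg_zero]
lemma lbz : (z * x) * z = 0 := by rw [mul_assoc, lxz, lzb]
lemma laa : (y * x) * (y * x) = 0 := by rw [← mul_assoc, lay, zero_mul]
lemma lab : (y * x) * (z * x) = 0 := by rw [← mul_assoc, laz, zero_mul]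
lemma lba : (z * x) * (y * x) = 0 := by rw [← mul_assoc, lby, zero_mul]
lemma lbb : (z * x) * (z * x) = 0 := by rw [← mul_assoc, lbz, zero_mul]

end products

/-! ### Spanning -/

/-- The span of the candidate basis. -/
noncomputable def S : Submodule k (Lam k q) := Submodule.span k (Set.range (v k q))

lemma hv : ∀ i, v k q i ∈ S k q := fun i => Submodule.subset_span ⟨i, rfl⟩

lemma hgen : ∀ b ∈ Set.range (v k q), ∀ c ∈ Set.range (v k q), b * c ∈ S k q := by
  have h0 : (0 : Lam k q) ∈ S k q := (S k q).zero_mem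
  have h1 : (1 : Lam k q) ∈ S k q := Submodule.subset_span ⟨0, rfl⟩
  have hx : Lam.x k q ∈ S k q := Submodule.subset_span ⟨1, rfl⟩
  have hy : Lam.y k q ∈ S k q := Submodule.subset_span ⟨2, rfl⟩
  have hz : Lam.z k q ∈ S k q := Submodule.subset_span ⟨3, rfl⟩
  have ha : Lam.y k q * Lam.x k q ∈ S k q := Submodule.subset_span ⟨4, rfl⟩
  have hb : Lam.z k q * Lam.x k q ∈ S k q := Submodule.subset_span ⟨5, rfl⟩
  intro b hbmem c hcmem
  simp only [v, Matrix.range_cons, Matrix.range_empty, Set.union_empty, Set.union_singleton,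
    Set.mem_insert_iff, Set.mem_singleton_iff, Set.mem_union] at hbmem hcmem
  rcases hbmem with rfl | rfl | rfl | rfl | rfl | rfl <;>
    rcases hcmem with rfl | rfl | rfl | rfl | rfl | rfl <;>
    first
      | (rw [one_mul]; assumption)
      | (rw [mul_one]; assumption)
      | exact ha
      | exact hb
      | (rw [lxx]; exact h0) | (rw [lyy]; exact h0) | (rw [lzz]; exact h0)
      | (rw [lyz]; exact h0)
      | (rw [lxy]; exact (S k q).neg_mem ((S k q).smul_mem q ha))
      | (rw [lxz]; exact hb) | (rw [lzy]; exact hb)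
      | (rw [lxa]; exact h0) | (rw [lxb]; exact h0) | (rw [lya]; exact h0)
      | (rw [lyb]; exact h0) | (rw [lza]; exact h0) | (rw [lzb]; exact h0)
      | (rw [lax]; exact h0) | (rw [lay]; exact h0) | (rw [laz]; exact h0)
      | (rw [lbx]; exact h0) | (rw [lby]; exact h0) | (rw [lbz]; exact h0)
      | (rw [laa]; exact h0) | (rw [lab]; exact h0) | (rw [lba]; exact h0)
      | (rw [lbb]; exact h0)

lemma hmul1 : ∀ b ∈ Set.range (v k q), ∀ a ∈ S k q, b * a ∈ S k q := by
  intro b hb a ha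
  induction ha using Submodule.span_induction with
  | mem c hc => exact hgen k q b hb c hc
  | zero => rw [mul_zero]; exact (S k q).zero_mem
  | add c d _ _ hc hd => rw [mul_add]; exact (S k q).add_mem hc hd
  | smul c d _ hd => rw [mul_smul_comm]; exact (S k q).smul_mem c hd

lemma hmul : ∀ a ∈ S k q, ∀ b ∈ S k q, a * b ∈ S k q := by
  intro a ha b hb
  induction ha using Submodule.span_induction with
  | mem u hu => exact hmul1 k q u hu b hb
  | zero => rw [zero_mul]; exact (S k q).zero_mem
  | add u w _ _ hu hw => rw [add_mul]; exact (S k q).add_mem hu hw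
  | smul c u _ hu => rw [smul_mul_assoc]; exact (S k q).smul_mem c hu

lemma span_top : S k q = ⊤ := by
  refine le_antisymm le_top ?_
  intro a _
  obtain ⟨p, rfl⟩ := RingQuot.mkAlgHom_surjective k (LamRel k q) a
  induction p using FreeAlgebra.induction with
  | grade0 r =>
    rw [AlgHom.commutes, Algebra.algebraMap_eq_smul_one]
    exact (S k q).smul_mem r (hv k q 0)
  | grade1 i =>
    fin_cases i
    · exact hv k q 1
    · exact hv k q 2
    · exact hv k q 3
  | mul a b ha hb => rw [map_mul]; exact hmul k q _ (ha Submodule.mem_top) _ (hb Submodule.mem_top)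
  | add a b ha hb => rw [map_add]; exact (S k q).add_mem (ha Submodule.mem_top) (hb Submodule.mem_top)

end LamAux

theorem stmt5 (hq : q ≠ 0) :
    (∃ b : Module.Basis (Fin 6) k (Lam k q),
      ⇑b = ![1, Lam.x k q, Lam.y k q, Lam.z k q,
             Lam.y k q * Lam.x k q, Lam.z k q * Lam.x k q]) ∧
    Module.finrank k (Lam k q) = 6 := by
  have hspan : ⊤ ≤ Submodule.span k (Set.range (LamAux.v k q)) :=
    le_of_eq (LamAux.span_top k q).symm
  have b : Module.Basis (Fin 6) k (Lam k q) := Module.Basis.mk (LamAux.li k q) hspan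
  refine ⟨⟨Module.Basis.mk (LamAux.li k q) hspan, ?_⟩, ?_⟩
  · rw [Module.Basis.coe_mk]; rfl
  · rw [Module.finrank_eq_card_basis (Module.Basis.mk (LamAux.li k q) hspan)]
    simp
end

section
/- Let k be a field, q ∈ k nonzero, Λ = k⟨x,y,z⟩/(x², y², z², yz, xy+q·yx, xz−zx, zy−zx), and C = [[Λ,0],[D(M(q)),k]]. Let U = { [[λ·yx,0],[0,0]] : λ ∈ Λ } ⊆ P₁ = Ce₁. Then U is a simple left C-module, one-dimensional over k, isomorphic to the simple top S₁ of P₁. -/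
open MulOpposite

section Tri
variable (R S N : Type) [Ring R] [Ring S]
  [AddCommGroup N] [Module S N] [Module Rᵐᵒᵖ N] [SMulCommClass S Rᵐᵒᵖ N]

/-- Lower triangular matrix ring [[R, 0],[N, S]]: elements (r, n, s). -/
def LTri : Type := R × N × S

instance : AddCommGroup (LTri R S N) := inferInstanceAs (AddCommGroup (R × N × S))

instance instLRing : Ring (LTri R S N) :=
  { (inferInstance : AddCommGroup (R × N × S)) with
    mul := fun x y => (x.1 * y.1, op y.1 • x.2.1 + x.2.2 • y.2.1, x.2.2 * y.2.2)
    one := (1, 0, 1)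
    mul_assoc := by
      rintro ⟨r,n,s⟩ ⟨r',n',s'⟩ ⟨r'',n'',s''⟩
      refine Prod.ext (mul_assoc ..) (Prod.ext ?_ (mul_assoc ..))
      show op r'' • (op r' • n + s • n') + (s*s') • n''
          = op (r'*r'') • n + s • (op r'' • n' + s' • n'')
      simp [mul_smul, smul_add, smul_comm (M := S) (N := Rᵐᵒᵖ)]
      abel
    one_mul := by
      rintro ⟨r,n,s⟩
      refine Prod.ext (one_mul _) (Prod.ext ?_ (one_mul _))
      show op r • (0:N) + (1:S) • n = n; simp
    mul_one := by
      rintro ⟨r,n,s⟩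
      refine Prod.ext (mul_one _) (Prod.ext ?_ (mul_one _))
      show op (1:R) • n + s • (0:N) = n; simp
    left_distrib := by
      rintro ⟨r,n,s⟩ ⟨r',n',s'⟩ ⟨r'',n'',s''⟩
      refine Prod.ext (mul_add ..) (Prod.ext ?_ (mul_add ..))
      show op (r' + r'') • n + s • (n' + n'')
          = (op r' • n + s • n') + (op r'' • n + s • n'')
      simp [smul_add, add_smul]; abel
    right_distrib := by
      rintro ⟨r,n,s⟩ ⟨r',n',s'⟩ ⟨r'',n'',s''⟩
      refine Prod.ext (add_mul ..) (Prod.ext ?_ (add_mul ..))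
      show op r'' • (n + n') + (s + s') • n''
          = (op r'' • n + s • n'') + (op r'' • n' + s' • n'')
      simp [smul_add, add_smul]; abel
    zero_mul := by
      rintro ⟨r,n,s⟩
      refine Prod.ext (zero_mul _) (Prod.ext ?_ (zero_mul _))
      show op r • (0:N) + (0:S) • n = 0; simp
    mul_zero := by
      rintro ⟨r,n,s⟩
      refine Prod.ext (mul_zero _) (Prod.ext ?_ (mul_zero _))
      show op (0:R) • n + s • (0:N) = 0; simp }

/-- Build an element of the lower triangular ring from its entries. -/
def LTri.mk (r : R) (n : N) (s : S) : LTri R S N := (r, n, s)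

end Tri

variable (k : Type) [Field k] (q : k)

section Calg
variable (M : Type) [AddCommGroup M] [Module k M]
  [Module (Lam k q) M] [SMulCommClass (Lam k q) k M]

/-- The right Λ-module structure on D(M) = Hom_k(M,k), `(f·a)(m) = f(a·m)`. -/
noncomputable instance dualOppModule : Module (Lam k q)ᵐᵒᵖ (M →ₗ[k] k) where
  smul a f := f ∘ₗ DistribMulAction.toLinearMap k M a.unop
  one_smul f := by ext m; show f ((1 : Lam k q) • m) = f m; simp
  mul_smul x y f := by
    ext m
    show f ((x * y).unop • m) = f (y.unop • x.unop • m)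
    simp [mul_smul]
  smul_zero a := by ext m; rfl
  smul_add a f g := by ext m; rfl
  add_smul x y f := by
    ext m
    show f ((x + y).unop • m) = f (x.unop • m) + f (y.unop • m)
    simp [add_smul]
  zero_smul f := by ext m; show f ((0 : Lam k q) • m) = 0; simp

instance : SMulCommClass k (Lam k q)ᵐᵒᵖ (M →ₗ[k] k) :=
  ⟨fun c a f => by ext m; rfl⟩

/-- The triangular matrix algebra C = [[Λ, 0],[D(M), k]]. -/
noncomputable abbrev CAlg : Type := LTri (Lam k q) k (M →ₗ[k] k)

/-- The idempotent e₁ = [[1,0],[0,0]] of C. -/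
noncomputable def Ce₁ : CAlg k q M := LTri.mk _ _ _ 1 0 0
/-- The idempotent e₂ = [[0,0],[0,1]] of C. -/
noncomputable def Ce₂ : CAlg k q M := LTri.mk _ _ _ 0 0 1

end Calg

/-- The k-vector space structure on C (entrywise). -/
noncomputable instance CAlgModK (M : Type) [AddCommGroup M] [Module k M]
    [Module (Lam k q) M] [SMulCommClass (Lam k q) k M] :
    Module k (CAlg k q M) :=
  (inferInstance : Module k (Lam k q × (M →ₗ[k] k) × k))

section Aux
namespace LamAux
variable {k : Type} [Field k] {q : k}

local notation "A" => Lam k q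
local notation "X" => Lam.x k q
local notation "Y" => Lam.y k q
local notation "Z" => Lam.z k q

lemma rel_eq {a b : FreeAlgebra k (Fin 3)} (h : LamRel k q a b) :
    RingQuot.mkAlgHom k (LamRel k q) a = RingQuot.mkAlgHom k (LamRel k q) b :=
  RingQuot.mkAlgHom_rel k h

lemma hxx : (X : A) * X = 0 := by
  have := rel_eq (q := q) (LamRel.x_sq (k := k))
  simp only [map_mul, map_zero] at this; exact this

lemma hyy : (Y : A) * Y = 0 := by
  have := rel_eq (q := q) (LamRel.y_sq (k := k))
  simp only [map_mul, map_zero] at this; exact this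

lemma hzz : (Z : A) * Z = 0 := by
  have := rel_eq (q := q) (LamRel.z_sq (k := k))
  simp only [map_mul, map_zero] at this; exact this

lemma hyz : (Y : A) * Z = 0 := by
  have := rel_eq (q := q) (LamRel.yz (k := k))
  simp only [map_mul, map_zero] at this; exact this

lemma hxy : (X : A) * Y = -(q • (Y * X)) := by
  have := rel_eq (q := q) (LamRel.xy (k := k))
  simp only [map_add, map_mul, map_smul, map_zero] at this
  rw [Lam.x, Lam.y, eq_neg_iff_add_eq_zero]
  exact this

lemma hxz : (X : A) * Z = Z * X := by
  have := rel_eq (q := q) (LamRel.xz (k := k))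
  simp only [map_sub, map_mul, map_zero, sub_eq_zero] at this
  exact this

lemma hzy : (Z : A) * Y = Z * X := by
  have := rel_eq (q := q) (LamRel.zy (k := k))
  simp only [map_sub, map_mul, map_zero, sub_eq_zero] at this
  exact this


/-- The augmentation (counit) ε : Λ → k. -/
lemma eps_rel : ∀ ⦃a b : FreeAlgebra k (Fin 3)⦄, LamRel k q a b →
    FreeAlgebra.lift k (fun _ => (0:k)) a = FreeAlgebra.lift k (fun _ => (0:k)) b := by
  rintro a b h
  induction h <;> simp

noncomputable def eps : Lam k q →ₐ[k] k :=
  RingQuot.liftAlgHom k ⟨FreeAlgebra.lift k (fun _ => (0:k)), eps_rel⟩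

lemma eps_mk (a : FreeAlgebra k (Fin 3)) :
    eps (q := q) (RingQuot.mkAlgHom k (LamRel k q) a)
      = FreeAlgebra.lift k (fun _ => (0:k)) a :=
  RingQuot.liftAlgHom_mkAlgHom_apply k (FreeAlgebra.lift k (fun _ => (0:k))) eps_rel a

@[simp] lemma eps_x : eps (q := q) (X : A) = 0 := by
  rw [Lam.x, eps_mk]; simp

@[simp] lemma eps_y : eps (q := q) (Y : A) = 0 := by
  rw [Lam.y, eps_mk]; simp

@[simp] lemma eps_z : eps (q := q) (Z : A) = 0 := by
  rw [Lam.z, eps_mk]; simp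

open Matrix in
/-- The matrix representation used to show yx ≠ 0. -/
noncomputable def repFun : FreeAlgebra k (Fin 3) →ₐ[k] Matrix (Fin 4) (Fin 4) k :=
  FreeAlgebra.lift k (fun i =>
      if i = 0 then Matrix.single 0 1 1 + Matrix.single 2 3 1
      else if i = 1 then Matrix.single 0 2 1 - q • Matrix.single 1 3 1
      else 0)

open Matrix in
lemma rep_rel : ∀ ⦃a b : FreeAlgebra k (Fin 3)⦄, LamRel k q a b →
    repFun (q := q) a = repFun (q := q) b := by
  rintro a b h
  induction h <;>
    simp [repFun, add_mul, mul_add, sub_mul, mul_sub, Matrix.single_mul_single_of_ne,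
      Matrix.single_mul_single_same, smul_smul]

noncomputable def rep : Lam k q →ₐ[k] Matrix (Fin 4) (Fin 4) k :=
  RingQuot.liftAlgHom k ⟨repFun, rep_rel⟩

lemma rep_mk (a : FreeAlgebra k (Fin 3)) :
    rep (q := q) (RingQuot.mkAlgHom k (LamRel k q) a) = repFun (q := q) a :=
  RingQuot.liftAlgHom_mkAlgHom_apply k repFun rep_rel a

open Matrix in
lemma rep_yx : rep (q := q) ((Y : A) * X) = Matrix.single (0:Fin 4) 3 1 := by
  rw [_root_.map_mul, Lam.x, Lam.y, rep_mk, rep_mk]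
  simp [repFun, add_mul, mul_add, sub_mul,
    Matrix.single_mul_single_of_ne, Matrix.single_mul_single_same]

lemma yx_ne_zero : ((Y : A) * X) ≠ 0 := by
  intro h
  have := rep_yx (k := k) (q := q)
  rw [h, map_zero] at this
  have := congrFun (congrFun this.symm 0) 3
  simp at this

/-- Induction principle for Λ. -/
lemma lam_induction {C : Lam k q → Prop}
    (h0 : ∀ c : k, C (algebraMap k (Lam k q) c))
    (hx : C (X : A)) (hy : C (Y : A)) (hz : C (Z : A))
    (hmul : ∀ a b, C a → C b → C (a * b))
    (hadd : ∀ a b, C a → C b → C (a + b)) : ∀ a : A, C a := by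
  intro a
  obtain ⟨a, rfl⟩ := RingQuot.mkAlgHom_surjective k (LamRel k q) a
  induction a using FreeAlgebra.induction with
  | grade0 r => rw [AlgHom.commutes]; exact h0 r
  | grade1 i =>
      fin_cases i
      · exact hx
      · exact hy
      · exact hz
  | mul a b ha hb => rw [map_mul]; exact hmul _ _ ha hb
  | add a b ha hb => rw [map_add]; exact hadd _ _ ha hb

lemma x_mul_w : (X : A) * (Y * X) = 0 := by
  rw [← mul_assoc, hxy, neg_mul, smul_mul_assoc, mul_assoc, hxx, mul_zero, smul_zero, neg_zero]

lemma y_mul_w : (Y : A) * (Y * X) = 0 := by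
  rw [← mul_assoc, hyy, zero_mul]

lemma z_mul_w : (Z : A) * (Y * X) = 0 := by
  rw [← mul_assoc, hzy, mul_assoc, hxx, mul_zero]

/-- Key lemma: l · yx = ε(l) · yx for all l. -/
lemma mul_w (l : A) : l * (Y * X) = eps (q := q) l • ((Y : A) * X) := by
  induction l using lam_induction with
  | h0 c => rw [Algebra.algebraMap_eq_smul_one, smul_mul_assoc, one_mul, map_smul]; simp
  | hx => simp [x_mul_w]
  | hy => simp [y_mul_w]
  | hz => simp [z_mul_w]
  | hmul a b ha hb =>
      rw [mul_assoc, hb, mul_smul_comm, ha, map_mul, smul_smul, mul_comm]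
  | hadd a b ha hb => rw [add_mul, ha, hb, map_add, add_smul]

-- Full multiplication table on the spanning set {1, X, Y, Z, W=YX, V=ZX}.
lemma x_v : (X : A) * (Z * X) = 0 := by rw [← mul_assoc, hxz, mul_assoc, hxx, mul_zero]
lemma y_v : (Y : A) * (Z * X) = 0 := by rw [← mul_assoc, hyz, zero_mul]
lemma z_v : (Z : A) * (Z * X) = 0 := by rw [← mul_assoc, hzz, zero_mul]
lemma w_x : ((Y : A) * X) * X = 0 := by rw [mul_assoc, hxx, mul_zero]
lemma w_y : ((Y : A) * X) * Y = 0 := by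
  rw [mul_assoc, hxy, mul_neg, mul_smul_comm, y_mul_w, smul_zero, neg_zero]
lemma w_z : ((Y : A) * X) * Z = 0 := by rw [mul_assoc, hxz, y_v]
lemma w_w : ((Y : A) * X) * (Y * X) = 0 := by rw [← mul_assoc, w_y, zero_mul]
lemma w_v : ((Y : A) * X) * (Z * X) = 0 := by rw [← mul_assoc, w_z, zero_mul]
lemma v_x : ((Z : A) * X) * X = 0 := by rw [mul_assoc, hxx, mul_zero]
lemma v_y : ((Z : A) * X) * Y = 0 := by
  rw [mul_assoc, hxy, mul_neg, mul_smul_comm, z_mul_w, smul_zero, neg_zero]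
lemma v_z : ((Z : A) * X) * Z = 0 := by rw [mul_assoc, hxz, z_v]
lemma v_w : ((Z : A) * X) * (Y * X) = 0 := by rw [← mul_assoc, v_y, zero_mul]
lemma v_v : ((Z : A) * X) * (Z * X) = 0 := by rw [← mul_assoc, v_z, zero_mul]

/-- Every element of Λ lies in the span of {1, x, y, z, yx, zx}. -/
lemma span_six (a : A) : ∃ c d e f g h : k,
    a = c • (1 : A) + d • X + e • Y + f • Z + g • (Y * X) + h • (Z * X) := by
  induction a using lam_induction with
  | h0 c =>
      exact ⟨c, 0, 0, 0, 0, 0, by simp [Algebra.algebraMap_eq_smul_one]⟩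
  | hx => exact ⟨0, 1, 0, 0, 0, 0, by simp⟩
  | hy => exact ⟨0, 0, 1, 0, 0, 0, by simp⟩
  | hz => exact ⟨0, 0, 0, 1, 0, 0, by simp⟩
  | hadd a b ha hb =>
      obtain ⟨c, d, e, f, g, h, rfl⟩ := ha
      obtain ⟨c', d', e', f', g', h', rfl⟩ := hb
      exact ⟨c + c', d + d', e + e', f + f', g + g', h + h', by module⟩
  | hmul a b ha hb =>
      obtain ⟨c, d, e, f, g, h, rfl⟩ := ha
      obtain ⟨c', d', e', f', g', h', rfl⟩ := hb
      refine ⟨c * c', c * d' + d * c', c * e' + e * c', c * f' + f * c',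
        c * g' + g * c' - q * (d * e') + e * d',
        c * h' + h * c' + d * f' + f * d' + f * e', ?_⟩
      simp only [mul_add, add_mul, smul_mul_assoc, mul_smul_comm, one_mul, mul_one,
        smul_smul, hxx, hyy, hzz, hyz, hxy, hxz, hzy, x_mul_w, y_mul_w, z_mul_w,
        x_v, y_v, z_v, w_x, w_y, w_z, w_w, w_v, v_x, v_y, v_z, v_w, v_v,
        smul_zero, add_zero, zero_add, smul_neg]
      module

lemma eps_six (c d e f g h : k) :
    eps (q := q) (c • (1 : A) + d • X + e • Y + f • Z + g • (Y * X) + h • (Z * X)) = c := by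
  simp [map_add, map_smul, _root_.map_mul]

/-- The cube of the augmentation ideal is zero. -/
lemma cube_zero (a b c : A) (ha : eps (q := q) a = 0) (hb : eps (q := q) b = 0)
    (hc : eps (q := q) c = 0) : a * b * c = 0 := by
  obtain ⟨c₁, d₁, e₁, f₁, g₁, h₁, rfl⟩ := span_six a
  obtain ⟨c₂, d₂, e₂, f₂, g₂, h₂, rfl⟩ := span_six b
  obtain ⟨c₃, d₃, e₃, f₃, g₃, h₃, rfl⟩ := span_six c
  rw [eps_six] at ha hb hc
  subst ha hb hc
  simp only [zero_smul, zero_add]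
  simp only [mul_add, add_mul, smul_mul_assoc, mul_smul_comm, one_mul, mul_one,
    smul_smul, hxx, hyy, hzz, hyz, hxy, hxz, hzy, x_mul_w, y_mul_w, z_mul_w,
    x_v, y_v, z_v, w_x, w_y, w_z, w_w, w_v, v_x, v_y, v_z, v_w, v_v,
    smul_zero, add_zero, zero_add, smul_neg, neg_zero, neg_mul, mul_neg, neg_neg, neg_add]

/-- Elements with nonzero augmentation have a left inverse. -/
lemma left_inv (r : A) (hr : eps (q := q) r ≠ 0) : ∃ s : A, s * r = 1 := by
  set u : k := eps (q := q) r with hu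
  set a : A := r - algebraMap k A u with haa
  have hea : eps (q := q) a = 0 := by simp [haa, hu]
  have hra : r = u • (1 : A) + a := by
    rw [haa, Algebra.algebraMap_eq_smul_one]; abel
  have hcube : a * a * a = 0 := cube_zero a a a hea hea hea
  refine ⟨u⁻¹ • (1 : A) - (u⁻¹ * u⁻¹) • a + (u⁻¹ * u⁻¹ * u⁻¹) • (a * a), ?_⟩
  rw [hra]
  simp only [mul_add, add_mul, sub_mul, smul_mul_assoc, mul_smul_comm, one_mul, mul_one,
    smul_smul]
  rw [hcube, smul_zero, add_zero]
  match_scalars <;> field_simp <;> ring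

end LamAux
end Aux

section TriAux
variable {R S N : Type} [Ring R] [Ring S]
  [AddCommGroup N] [Module S N] [Module Rᵐᵒᵖ N] [SMulCommClass S Rᵐᵒᵖ N]

lemma LTri.exists_mk (c : LTri R S N) : ∃ r n s, c = LTri.mk R S N r n s :=
  ⟨(show R × N × S from c).1, (show R × N × S from c).2.1,
    (show R × N × S from c).2.2, rfl⟩

lemma LTri.mk_mul_mk (r r' : R) (n n' : N) (s s' : S) :
    LTri.mk R S N r n s * LTri.mk R S N r' n' s'
      = LTri.mk R S N (r * r') (op r' • n + s • n') (s * s') := rfl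

lemma LTri.mk_add_mk (r r' : R) (n n' : N) (s s' : S) :
    LTri.mk R S N r n s + LTri.mk R S N r' n' s'
      = LTri.mk R S N (r + r') (n + n') (s + s') := rfl

lemma LTri.mk_sub_mk (r r' : R) (n n' : N) (s s' : S) :
    LTri.mk R S N r n s - LTri.mk R S N r' n' s'
      = LTri.mk R S N (r - r') (n - n') (s - s') := rfl

lemma LTri.zero_eq : (0 : LTri R S N) = LTri.mk R S N 0 0 0 := rfl
lemma LTri.one_eq : (1 : LTri R S N) = LTri.mk R S N 1 0 1 := rfl

lemma LTri.mk_inj {r r' : R} {n n' : N} {s s' : S} :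
    LTri.mk R S N r n s = LTri.mk R S N r' n' s' ↔ r = r' ∧ n = n' ∧ s = s' := by
  constructor
  · intro h
    exact ⟨congrArg (fun c => (show R × N × S from c).1) h,
      congrArg (fun c => (show R × N × S from c).2.1) h,
      congrArg (fun c => (show R × N × S from c).2.2) h⟩
  · rintro ⟨rfl, rfl, rfl⟩; rfl

end TriAux

set_option maxHeartbeats 2000000 in
theorem stmt17 (hq : q ≠ 0)
    (M : Type) [AddCommGroup M] [Module k M] [Module (Lam k q) M]
    [IsScalarTower k (Lam k q) M] [SMulCommClass (Lam k q) k M]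
    (b : Module.Basis (Fin 3) k M)
    (hxv : Lam.x k q • b 0 = q • b 1) (hyv : Lam.y k q • b 0 = b 1)
    (hzv : Lam.z k q • b 0 = b 2)
    (hxv' : Lam.x k q • b 1 = 0) (hyv' : Lam.y k q • b 1 = 0)
    (hzv' : Lam.z k q • b 1 = 0)
    (hxv'' : Lam.x k q • b 2 = 0) (hyv'' : Lam.y k q • b 2 = 0)
    (hzv'' : Lam.z k q • b 2 = 0) :
    ∃ V : Submodule (CAlg k q M) (CAlg k q M),
      -- V has carrier U = { [[λ·yx, 0],[0, 0]] : λ ∈ Λ },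
      (V : Set (CAlg k q M))
        = {c | ∃ l : Lam k q, c = LTri.mk _ _ _ (l * (Lam.y k q * Lam.x k q)) 0 0} ∧
      -- V is a simple C-module,
      IsSimpleModule (CAlg k q M) V ∧
      -- V is one-dimensional over k,
      (∃ u₀ ∈ V, u₀ ≠ 0 ∧ ∀ c ∈ V, ∃ a : k, c = a • u₀) ∧
      -- and V is isomorphic to the simple top S₁ = P₁/rad(P₁) of P₁ = C·e₁.
      Nonempty (V ≃ₗ[CAlg k q M]
        (Submodule.span (CAlg k q M) {Ce₁ k q M} ⧸
          sInf {m : Submodule (CAlg k q M)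
            (Submodule.span (CAlg k q M) {Ce₁ k q M}) | IsCoatom m})) := by
  classical
  set w : Lam k q := Lam.y k q * Lam.x k q with hwdef
  have hwne : w ≠ 0 := LamAux.yx_ne_zero
  -- w annihilates M
  have hw0 : ∀ m : M, w • m = 0 := by
    have h : DistribSMul.toLinearMap k M w = (0 : M →ₗ[k] M) := by
      apply b.ext
      intro i
      fin_cases i <;>
        simp [hwdef, mul_smul, hxv, hxv', hxv'', hyv', smul_comm (Lam.y k q) q]
    intro m
    simpa using LinearMap.congr_fun h m
  -- op (l * w) kills every functional
  have hopw : ∀ (l : Lam k q) (n : M →ₗ[k] k), op (l * w) • n = 0 := by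
    intro l n
    ext m
    show n ((l * w) • m) = 0
    rw [mul_smul, hw0, smul_zero, map_zero]
  have hopw1 : ∀ n : M →ₗ[k] k, op w • n = 0 := by
    intro n; have := hopw 1 n; rwa [one_mul] at this
  -- scalar cancellation on w
  have hsw : ∀ a : k, a • w = 0 → a = 0 := by
    intro a ha
    by_contra h
    exact hwne (by rw [← one_smul k w, ← inv_mul_cancel₀ h, mul_smul, ha, smul_zero])
  set u₀ : CAlg k q M := LTri.mk _ _ _ w 0 0 with hu₀def
  set V : Submodule (CAlg k q M) (CAlg k q M) := Submodule.span (CAlg k q M) {u₀} with hVdef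
  -- computing c • u₀
  have hsmulu₀ : ∀ c : CAlg k q M, ∃ r nn s, c = LTri.mk _ _ _ r nn s ∧
      c * u₀ = LTri.mk _ _ _ (r * w) 0 0 := by
    intro c
    obtain ⟨r, nn, s, rfl⟩ := LTri.exists_mk c
    refine ⟨r, nn, s, rfl, ?_⟩
    rw [hu₀def, LTri.mk_mul_mk, hopw1, smul_zero, add_zero, mul_zero]
  have hVset : (V : Set (CAlg k q M))
      = {c | ∃ l : Lam k q, c = LTri.mk _ _ _ (l * w) 0 0} := by
    ext c
    rw [SetLike.mem_coe, hVdef, Submodule.mem_span_singleton]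
    constructor
    · rintro ⟨cc, rfl⟩
      obtain ⟨r, nn, s, -, hmul⟩ := hsmulu₀ cc
      exact ⟨r, by rw [smul_eq_mul, hmul]⟩
    · rintro ⟨l, rfl⟩
      refine ⟨LTri.mk _ _ _ l 0 0, ?_⟩
      rw [smul_eq_mul, hu₀def, LTri.mk_mul_mk, hopw1, smul_zero, add_zero, mul_zero]
  have hmemV : ∀ c : CAlg k q M, c ∈ V ↔ ∃ l : Lam k q, c = LTri.mk _ _ _ (l * w) 0 0 := by
    intro c
    rw [← SetLike.mem_coe, hVset]; rfl
  have hu₀V : u₀ ∈ V := Submodule.mem_span_singleton_self u₀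
  have hu₀ne : u₀ ≠ 0 := by
    intro h
    rw [hu₀def, LTri.zero_eq, LTri.mk_inj] at h
    exact hwne h.1
  -- k-smul on CAlg
  have hksmul : ∀ (a : k) (r : Lam k q) (nn : M →ₗ[k] k) (s : k),
      a • LTri.mk (Lam k q) k (M →ₗ[k] k) r nn s = LTri.mk _ _ _ (a • r) (a • nn) (a • s) :=
    fun _ _ _ _ => rfl
  -- simplicity of V
  have hbotne : (⊥ : Submodule (CAlg k q M) V) ≠ ⊤ := by
    intro h
    apply hu₀ne
    have : (⟨u₀, hu₀V⟩ : V) ∈ (⊥ : Submodule (CAlg k q M) V) := by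
      rw [h]; trivial
    simpa [Submodule.mem_bot, Subtype.ext_iff] using this
  have hsimple : IsSimpleModule (CAlg k q M) V := by
    refine { toNontrivial := ⟨⟨⊥, ⊤, hbotne⟩⟩, eq_bot_or_eq_top := ?_ }
    · intro W
      rcases eq_or_ne W ⊥ with h | h
      · exact Or.inl h
      refine Or.inr ?_
      obtain ⟨v, hvW, hvne⟩ := Submodule.exists_mem_ne_zero_of_ne_bot h
      obtain ⟨l, hl⟩ := (hmemV v.1).mp v.2
      have hepsl : LamAux.eps (q := q) l ≠ 0 := by
        intro h0
        apply hvne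
        apply Subtype.ext
        rw [hl, LamAux.mul_w, h0, zero_smul]
        rfl
      rw [eq_top_iff]
      rintro v' -
      obtain ⟨l', hl'⟩ := (hmemV v'.1).mp v'.2
      set a : k := LamAux.eps (q := q) l' * (LamAux.eps (q := q) l)⁻¹ with hadef
      have key : (LTri.mk (Lam k q) k (M →ₗ[k] k) (algebraMap k (Lam k q) a) 0 0) • v = v' := by
        apply Subtype.ext
        show _ * (v : CAlg k q M) = (v' : CAlg k q M)
        rw [hl, hl', LTri.mk_mul_mk]
        rw [hopw, smul_zero, add_zero, mul_zero]
        rw [← Algebra.smul_def, LamAux.mul_w l, smul_smul, hadef,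
          mul_assoc, inv_mul_cancel₀ hepsl, mul_one, ← LamAux.mul_w l']
      rw [← key]
      exact W.smul_mem _ hvW
  -- one-dimensionality data
  have hdim : ∃ u ∈ V, u ≠ 0 ∧ ∀ c ∈ V, ∃ a : k, c = a • u := by
    refine ⟨u₀, hu₀V, hu₀ne, ?_⟩
    intro c hc
    obtain ⟨l, rfl⟩ := (hmemV c).mp hc
    refine ⟨LamAux.eps (q := q) l, ?_⟩
    rw [hu₀def, hksmul, smul_zero, smul_zero, LamAux.mul_w l]
  -- P₁ and its structure
  set P₁ : Submodule (CAlg k q M) (CAlg k q M) :=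
    Submodule.span (CAlg k q M) {Ce₁ k q M} with hP₁def
  have hCe₁ : Ce₁ k q M = LTri.mk _ _ _ 1 0 0 := rfl
  have hP₁mem : ∀ p : CAlg k q M, p ∈ P₁ ↔
      ∃ (r : Lam k q) (nn : M →ₗ[k] k), p = LTri.mk _ _ _ r nn 0 := by
    intro p
    rw [hP₁def, Submodule.mem_span_singleton]
    constructor
    · rintro ⟨c, rfl⟩
      obtain ⟨r, nn, s, rfl⟩ := LTri.exists_mk c
      refine ⟨r, nn, ?_⟩
      rw [smul_eq_mul, hCe₁, LTri.mk_mul_mk, mul_one, mul_zero, smul_zero, add_zero,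
        op_one, one_smul]
    · rintro ⟨r, nn, rfl⟩
      refine ⟨LTri.mk _ _ _ r nn 0, ?_⟩
      rw [smul_eq_mul, hCe₁, LTri.mk_mul_mk, mul_one, mul_zero, smul_zero, add_zero,
        op_one, one_smul]
  -- the projection Φ : P₁ → V, p ↦ p * u₀
  have hΦmem : ∀ p : P₁, ((LinearMap.toSpanSingleton (CAlg k q M) (CAlg k q M) u₀).comp
      P₁.subtype) p ∈ V := by
    intro p
    show (p : CAlg k q M) • u₀ ∈ V
    rw [smul_eq_mul]
    obtain ⟨r, nn, s, -, hmul⟩ := hsmulu₀ p.1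
    rw [hmul]
    exact (hmemV _).mpr ⟨r, rfl⟩
  set Φ : P₁ →ₗ[CAlg k q M] V := LinearMap.codRestrict V
    ((LinearMap.toSpanSingleton (CAlg k q M) (CAlg k q M) u₀).comp P₁.subtype) hΦmem with hΦdef
  have hΦval : ∀ p : P₁, (Φ p : CAlg k q M) = (p : CAlg k q M) * u₀ := by
    intro p; rfl
  have hΦsurj : Function.Surjective Φ := by
    intro v
    obtain ⟨l, hl⟩ := (hmemV v.1).mp v.2
    have hp : (LTri.mk (Lam k q) k (M →ₗ[k] k) l 0 0) ∈ P₁ := (hP₁mem _).mpr ⟨l, 0, rfl⟩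
    refine ⟨⟨_, hp⟩, ?_⟩
    apply Subtype.ext
    rw [hΦval, hu₀def, LTri.mk_mul_mk, hopw1, smul_zero, add_zero, mul_zero, hl]
  haveI : IsSimpleModule (CAlg k q M) V := hsimple
  have hcoatom : IsCoatom (LinearMap.ker Φ) := LinearMap.isCoatom_ker_of_surjective hΦsurj
  -- every coatom contains ker Φ
  have hker_le : ∀ m : Submodule (CAlg k q M) P₁, IsCoatom m → LinearMap.ker Φ ≤ m := by
    intro m hm p hp
    by_contra hpm
    -- m ⊔ span {p} = ⊤
    have hlt : m < m ⊔ Submodule.span (CAlg k q M) {p} := by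
      refine lt_of_le_of_ne le_sup_left fun h => hpm ?_
      rw [h]
      exact Submodule.mem_sup_right (Submodule.mem_span_singleton_self p)
    have htop : m ⊔ Submodule.span (CAlg k q M) {p} = ⊤ := hm.2 _ hlt
    -- the generator e₁ of P₁, as an element of P₁
    have he₁P : Ce₁ k q M ∈ P₁ := Submodule.mem_span_singleton_self _
    have he₁mem : (⟨Ce₁ k q M, he₁P⟩ : P₁) ∈ m ⊔ Submodule.span (CAlg k q M) {p} := by
      rw [htop]; trivial
    obtain ⟨y, hy, z, hz, hyz⟩ := Submodule.mem_sup.mp he₁mem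
    obtain ⟨c, hc⟩ := Submodule.mem_span_singleton.mp hz
    -- components of p
    obtain ⟨r, nn, hrnn⟩ := (hP₁mem p.1).mp p.2
    -- p ∈ ker Φ forces ε r = 0
    have hεr : LamAux.eps (q := q) r = 0 := by
      have h0 : (Φ p : CAlg k q M) = 0 := by
        rw [LinearMap.mem_ker.mp hp]; rfl
      rw [hΦval, hrnn, hu₀def, LTri.mk_mul_mk, hopw1, smul_zero, add_zero, mul_zero,
        LTri.zero_eq, LTri.mk_inj] at h0
      have := h0.1
      rw [LamAux.mul_w r] at this
      exact hsw _ this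
    -- compute the component of y
    obtain ⟨rc, nc, sc, hcdef⟩ := LTri.exists_mk c
    have hyval : (y : CAlg k q M) = LTri.mk _ _ _ (1 - rc * r) (0 - (op r • nc + sc • nn))
        (0 - 0) := by
      have hzval : (z : CAlg k q M) = c * (p : CAlg k q M) := by rw [← hc]; rfl
      have hsum : (y : CAlg k q M) + (z : CAlg k q M) = Ce₁ k q M := congrArg Subtype.val hyz
      have hyv2 : (y : CAlg k q M) = Ce₁ k q M - c * (p : CAlg k q M) := by
        rw [← hzval, ← hsum]; abel
      rw [hyv2, hrnn, hcdef, LTri.mk_mul_mk, mul_zero, hCe₁, LTri.mk_sub_mk]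
    have hεy : LamAux.eps (q := q) (1 - rc * r) ≠ 0 := by
      rw [map_sub, _root_.map_mul, hεr, mul_zero, map_one, sub_zero]
      exact one_ne_zero
    obtain ⟨s, hs⟩ := LamAux.left_inv _ hεy
    -- d • y = e₁
    have hde₁ : (LTri.mk (Lam k q) k (M →ₗ[k] k) s 0 0) • y = (⟨Ce₁ k q M, he₁P⟩ : P₁) := by
      apply Subtype.ext
      show _ * (y : CAlg k q M) = Ce₁ k q M
      rw [hyval, LTri.mk_mul_mk, hs, smul_zero, zero_smul,
        add_zero, zero_mul, hCe₁]
    have he₁m : (⟨Ce₁ k q M, he₁P⟩ : P₁) ∈ m := by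
      rw [← hde₁]; exact m.smul_mem _ hy
    -- hence m = ⊤, contradiction
    apply hm.1
    rw [eq_top_iff]
    rintro p' -
    obtain ⟨c', hc'⟩ := Submodule.mem_span_singleton.mp p'.2
    have : c' • (⟨Ce₁ k q M, he₁P⟩ : P₁) = p' := by
      apply Subtype.ext
      show c' • Ce₁ k q M = (p' : CAlg k q M)
      rw [hc']
    rw [← this]
    exact m.smul_mem _ he₁m
  have hrad : sInf {m : Submodule (CAlg k q M) P₁ | IsCoatom m} = LinearMap.ker Φ :=
    le_antisymm (sInf_le hcoatom) (le_sInf fun m hm => hker_le m hm)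
  refine ⟨V, hVset, hsimple, hdim, ⟨?_⟩⟩
  exact ((Φ.quotKerEquivOfSurjective hΦsurj).symm.trans
    (Submodule.quotEquivOfEq _ _ hrad.symm)).symm.symm
end
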